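/- Fix ω ≠ 0 and γ > 0, and define the two-qubit Lindblad generator on 4×4 complex matrices (acting on ℂ² ⊗ ℂ²) by L(η) = −i(ω/2)([σ_z ⊗ I, η] + [I ⊗ σ_z, η]) + γ((σ_x ⊗ I) η (σ_x ⊗ I) − η) + γ((I ⊗ σ_x) η (I ⊗ σ_x) − η). Then the unique 4×4 matrix η with η positive semidefinite, Tr η = 1, and L(η) = 0 is the maximally mixed state η = (1/4) I₄ = (1/4) I ⊗ I, which is a separable state. -/

import Mathlib

open Matrix Kronecker Complex
open scoped ComplexOrder

noncomputable section

/-- The Pauli matrix `σ_x`. -/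
def sigmaX : Matrix (Fin 2) (Fin 2) ℂ := !![0, 1; 1, 0]

/-- The Pauli matrix `σ_z`. -/
def sigmaZ : Matrix (Fin 2) (Fin 2) ℂ := !![1, 0; 0, -1]

end

private lemma psd_smul_one {n : Type*} [Fintype n] [DecidableEq n] (c : ℂ) (hc : 0 ≤ c) :
    ((c • (1 : Matrix n n ℂ)).PosSemidef) := by
  have him : c.im = 0 := ((Complex.le_def.mp hc).2).symm.trans Complex.zero_im
  constructor
  · have hs : star c = c := Complex.conj_eq_iff_im.mpr him
    rw [Matrix.IsHermitian, Matrix.conjTranspose_smul, Matrix.conjTranspose_one, hs]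
  · exact (Matrix.PosSemidef.one.smul hc).2

private lemma cancel_left (c t : ℂ) (hc : c ≠ 0) (h : c * t = 0) : t = 0 :=
  (mul_eq_zero.mp h).resolve_left hc

set_option maxHeartbeats 3200000 in
/-- For `ω ≠ 0` and `γ > 0`, the unique state (positive semidefinite
`4×4` matrix of trace one) annihilated by the two-qubit Lindblad generator
`L(η) = −i(ω/2)([σ_z⊗I, η] + [I⊗σ_z, η]) + γ((σ_x⊗I) η (σ_x⊗I) − η) + γ((I⊗σ_x) η (I⊗σ_x) − η)`
is the maximally mixed state `η = I₄/4 = (I/2) ⊗ (I/2)`, which is a separable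
(product) state. -/
theorem two_qubit_lindblad_unique_stationary_state_separable
    (ω γ : ℝ) (hω : ω ≠ 0) (hγ : 0 < γ)
    (L : Matrix (Fin 2 × Fin 2) (Fin 2 × Fin 2) ℂ → Matrix (Fin 2 × Fin 2) (Fin 2 × Fin 2) ℂ)
    (hL : ∀ η, L η =
        (-Complex.I * ((ω : ℂ) / 2)) •
          (((sigmaZ ⊗ₖ (1 : Matrix (Fin 2) (Fin 2) ℂ)) * η
              - η * (sigmaZ ⊗ₖ (1 : Matrix (Fin 2) (Fin 2) ℂ)))
            + (((1 : Matrix (Fin 2) (Fin 2) ℂ) ⊗ₖ sigmaZ) * η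
              - η * ((1 : Matrix (Fin 2) (Fin 2) ℂ) ⊗ₖ sigmaZ)))
        + (γ : ℂ) • ((sigmaX ⊗ₖ (1 : Matrix (Fin 2) (Fin 2) ℂ)) * η
            * (sigmaX ⊗ₖ (1 : Matrix (Fin 2) (Fin 2) ℂ)) - η)
        + (γ : ℂ) • (((1 : Matrix (Fin 2) (Fin 2) ℂ) ⊗ₖ sigmaX) * η
            * ((1 : Matrix (Fin 2) (Fin 2) ℂ) ⊗ₖ sigmaX) - η)) :
    (∀ η : Matrix (Fin 2 × Fin 2) (Fin 2 × Fin 2) ℂ,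
      (η.PosSemidef ∧ η.trace = 1 ∧ L η = 0) ↔
        η = (4 : ℂ)⁻¹ • (1 : Matrix (Fin 2 × Fin 2) (Fin 2 × Fin 2) ℂ)) ∧
    (4 : ℂ)⁻¹ • (1 : Matrix (Fin 2 × Fin 2) (Fin 2 × Fin 2) ℂ)
      = ((2 : ℂ)⁻¹ • (1 : Matrix (Fin 2) (Fin 2) ℂ)) ⊗ₖ
          ((2 : ℂ)⁻¹ • (1 : Matrix (Fin 2) (Fin 2) ℂ)) ∧
    ∃ ρ₁ ρ₂ : Matrix (Fin 2) (Fin 2) ℂ,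
      ρ₁.PosSemidef ∧ ρ₁.trace = 1 ∧ ρ₂.PosSemidef ∧ ρ₂.trace = 1 ∧
        (4 : ℂ)⁻¹ • (1 : Matrix (Fin 2 × Fin 2) (Fin 2 × Fin 2) ℂ) = ρ₁ ⊗ₖ ρ₂ := by
  have hx2 : sigmaX * sigmaX = 1 := by
    simp [sigmaX, Matrix.mul_fin_two, ← Matrix.one_fin_two]
  have hkron : (4 : ℂ)⁻¹ • (1 : Matrix (Fin 2 × Fin 2) (Fin 2 × Fin 2) ℂ)
      = ((2 : ℂ)⁻¹ • (1 : Matrix (Fin 2) (Fin 2) ℂ)) ⊗ₖ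
          ((2 : ℂ)⁻¹ • (1 : Matrix (Fin 2) (Fin 2) ℂ)) := by
    rw [Matrix.smul_kronecker, Matrix.kronecker_smul, Matrix.one_kronecker_one, smul_smul]
    norm_num
  have hγc : (γ : ℂ) ≠ 0 := by exact_mod_cast hγ.ne'
  have hωc : (ω : ℂ) ≠ 0 := by exact_mod_cast hω
  have hIω : Complex.I * (ω : ℂ) ≠ 0 := mul_ne_zero Complex.I_ne_zero hωc
  have h8 : (8 * (γ : ℂ) ^ 2 + (ω : ℂ) ^ 2) ≠ 0 := by
    have h : (0 : ℝ) < 8 * γ ^ 2 + ω ^ 2 := by positivity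
    intro hc
    exact h.ne' (by exact_mod_cast hc)
  refine ⟨fun η => ⟨fun ⟨hps, htr, hz⟩ => ?_, fun hEq => ?_⟩, hkron, ?_⟩
  · -- forward direction
    have h0 : (-Complex.I * ((ω : ℂ) / 2)) •
          (((sigmaZ ⊗ₖ (1 : Matrix (Fin 2) (Fin 2) ℂ)) * η
              - η * (sigmaZ ⊗ₖ (1 : Matrix (Fin 2) (Fin 2) ℂ)))
            + (((1 : Matrix (Fin 2) (Fin 2) ℂ) ⊗ₖ sigmaZ) * η
              - η * ((1 : Matrix (Fin 2) (Fin 2) ℂ) ⊗ₖ sigmaZ)))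
        + (γ : ℂ) • ((sigmaX ⊗ₖ (1 : Matrix (Fin 2) (Fin 2) ℂ)) * η
            * (sigmaX ⊗ₖ (1 : Matrix (Fin 2) (Fin 2) ℂ)) - η)
        + (γ : ℂ) • (((1 : Matrix (Fin 2) (Fin 2) ℂ) ⊗ₖ sigmaX) * η
            * ((1 : Matrix (Fin 2) (Fin 2) ℂ) ⊗ₖ sigmaX) - η) = 0 := by
      rw [← hL η]; exact hz
    have eD1 := congrFun (congrFun h0 ((0:Fin 2),(0:Fin 2))) ((0:Fin 2),(0:Fin 2))
    have eB1 := congrFun (congrFun h0 ((0:Fin 2),(0:Fin 2))) ((0:Fin 2),(1:Fin 2))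
    have eA1 := congrFun (congrFun h0 ((0:Fin 2),(0:Fin 2))) ((1:Fin 2),(0:Fin 2))
    have eC1 := congrFun (congrFun h0 ((0:Fin 2),(0:Fin 2))) ((1:Fin 2),(1:Fin 2))
    have eB2 := congrFun (congrFun h0 ((0:Fin 2),(1:Fin 2))) ((0:Fin 2),(0:Fin 2))
    have eD3 := congrFun (congrFun h0 ((0:Fin 2),(1:Fin 2))) ((0:Fin 2),(1:Fin 2))
    have eC4 := congrFun (congrFun h0 ((0:Fin 2),(1:Fin 2))) ((1:Fin 2),(0:Fin 2))
    have eA3 := congrFun (congrFun h0 ((0:Fin 2),(1:Fin 2))) ((1:Fin 2),(1:Fin 2))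
    have eA2 := congrFun (congrFun h0 ((1:Fin 2),(0:Fin 2))) ((0:Fin 2),(0:Fin 2))
    have eC3 := congrFun (congrFun h0 ((1:Fin 2),(0:Fin 2))) ((0:Fin 2),(1:Fin 2))
    have eD2 := congrFun (congrFun h0 ((1:Fin 2),(0:Fin 2))) ((1:Fin 2),(0:Fin 2))
    have eB3 := congrFun (congrFun h0 ((1:Fin 2),(0:Fin 2))) ((1:Fin 2),(1:Fin 2))
    have eC2 := congrFun (congrFun h0 ((1:Fin 2),(1:Fin 2))) ((0:Fin 2),(0:Fin 2))
    have eA4 := congrFun (congrFun h0 ((1:Fin 2),(1:Fin 2))) ((0:Fin 2),(1:Fin 2))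
    have eB4 := congrFun (congrFun h0 ((1:Fin 2),(1:Fin 2))) ((1:Fin 2),(0:Fin 2))
    have eD4 := congrFun (congrFun h0 ((1:Fin 2),(1:Fin 2))) ((1:Fin 2),(1:Fin 2))
    simp [Matrix.add_apply, Matrix.sub_apply, Matrix.smul_apply, Matrix.mul_apply,
      Fintype.sum_prod_type, Fin.sum_univ_two, kroneckerMap_apply, sigmaX, sigmaZ,
      Matrix.one_apply] at eD1
    simp [Matrix.add_apply, Matrix.sub_apply, Matrix.smul_apply, Matrix.mul_apply,
      Fintype.sum_prod_type, Fin.sum_univ_two, kroneckerMap_apply, sigmaX, sigmaZ,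
      Matrix.one_apply] at eB1
    simp [Matrix.add_apply, Matrix.sub_apply, Matrix.smul_apply, Matrix.mul_apply,
      Fintype.sum_prod_type, Fin.sum_univ_two, kroneckerMap_apply, sigmaX, sigmaZ,
      Matrix.one_apply] at eA1
    simp [Matrix.add_apply, Matrix.sub_apply, Matrix.smul_apply, Matrix.mul_apply,
      Fintype.sum_prod_type, Fin.sum_univ_two, kroneckerMap_apply, sigmaX, sigmaZ,
      Matrix.one_apply] at eC1
    simp [Matrix.add_apply, Matrix.sub_apply, Matrix.smul_apply, Matrix.mul_apply,
      Fintype.sum_prod_type, Fin.sum_univ_two, kroneckerMap_apply, sigmaX, sigmaZ,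
      Matrix.one_apply] at eB2
    simp [Matrix.add_apply, Matrix.sub_apply, Matrix.smul_apply, Matrix.mul_apply,
      Fintype.sum_prod_type, Fin.sum_univ_two, kroneckerMap_apply, sigmaX, sigmaZ,
      Matrix.one_apply] at eD3
    simp [Matrix.add_apply, Matrix.sub_apply, Matrix.smul_apply, Matrix.mul_apply,
      Fintype.sum_prod_type, Fin.sum_univ_two, kroneckerMap_apply, sigmaX, sigmaZ,
      Matrix.one_apply] at eC4
    simp [Matrix.add_apply, Matrix.sub_apply, Matrix.smul_apply, Matrix.mul_apply,
      Fintype.sum_prod_type, Fin.sum_univ_two, kroneckerMap_apply, sigmaX, sigmaZ,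
      Matrix.one_apply] at eA3
    simp [Matrix.add_apply, Matrix.sub_apply, Matrix.smul_apply, Matrix.mul_apply,
      Fintype.sum_prod_type, Fin.sum_univ_two, kroneckerMap_apply, sigmaX, sigmaZ,
      Matrix.one_apply] at eA2
    simp [Matrix.add_apply, Matrix.sub_apply, Matrix.smul_apply, Matrix.mul_apply,
      Fintype.sum_prod_type, Fin.sum_univ_two, kroneckerMap_apply, sigmaX, sigmaZ,
      Matrix.one_apply] at eC3
    simp [Matrix.add_apply, Matrix.sub_apply, Matrix.smul_apply, Matrix.mul_apply,
      Fintype.sum_prod_type, Fin.sum_univ_two, kroneckerMap_apply, sigmaX, sigmaZ,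
      Matrix.one_apply] at eD2
    simp [Matrix.add_apply, Matrix.sub_apply, Matrix.smul_apply, Matrix.mul_apply,
      Fintype.sum_prod_type, Fin.sum_univ_two, kroneckerMap_apply, sigmaX, sigmaZ,
      Matrix.one_apply] at eB3
    simp [Matrix.add_apply, Matrix.sub_apply, Matrix.smul_apply, Matrix.mul_apply,
      Fintype.sum_prod_type, Fin.sum_univ_two, kroneckerMap_apply, sigmaX, sigmaZ,
      Matrix.one_apply] at eC2
    simp [Matrix.add_apply, Matrix.sub_apply, Matrix.smul_apply, Matrix.mul_apply,
      Fintype.sum_prod_type, Fin.sum_univ_two, kroneckerMap_apply, sigmaX, sigmaZ,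
      Matrix.one_apply] at eA4
    simp [Matrix.add_apply, Matrix.sub_apply, Matrix.smul_apply, Matrix.mul_apply,
      Fintype.sum_prod_type, Fin.sum_univ_two, kroneckerMap_apply, sigmaX, sigmaZ,
      Matrix.one_apply] at eB4
    simp [Matrix.add_apply, Matrix.sub_apply, Matrix.smul_apply, Matrix.mul_apply,
      Fintype.sum_prod_type, Fin.sum_univ_two, kroneckerMap_apply, sigmaX, sigmaZ,
      Matrix.one_apply] at eD4
    have ht : η ((0:Fin 2),(0:Fin 2)) ((0:Fin 2),(0:Fin 2))
        + η ((0:Fin 2),(1:Fin 2)) ((0:Fin 2),(1:Fin 2))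
        + η ((1:Fin 2),(0:Fin 2)) ((1:Fin 2),(0:Fin 2))
        + η ((1:Fin 2),(1:Fin 2)) ((1:Fin 2),(1:Fin 2)) = 1 := by
      have := htr
      simp only [Matrix.trace, Matrix.diag, Fintype.sum_prod_type, Fin.sum_univ_two] at this
      linear_combination this
    -- Orbit A : x = η (0,0) (1,0), y = η (1,0) (0,0), u = η (0,1) (1,1), v = η (1,1) (0,1)
    have hA1 : η ((1:Fin 2),(0:Fin 2)) ((0:Fin 2),(0:Fin 2))
        - η ((1:Fin 2),(1:Fin 2)) ((0:Fin 2),(1:Fin 2)) = 0 :=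
      cancel_left _ _ h8 (by linear_combination (-(γ:ℂ))*eA1 + (γ:ℂ)*eA3
        - (3*(γ:ℂ)+Complex.I*ω)*eA2 + (3*(γ:ℂ)+Complex.I*ω)*eA4
        + ((ω:ℂ)^2*(η ((1:Fin 2),(0:Fin 2)) ((0:Fin 2),(0:Fin 2))
          - η ((1:Fin 2),(1:Fin 2)) ((0:Fin 2),(1:Fin 2))))*Complex.I_sq)
    have hA2 : η ((0:Fin 2),(0:Fin 2)) ((1:Fin 2),(0:Fin 2))
        - η ((0:Fin 2),(1:Fin 2)) ((1:Fin 2),(1:Fin 2)) = 0 :=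
      cancel_left _ _ hγc (by linear_combination eA2 - eA4 + (3*(γ:ℂ)-Complex.I*ω)*hA1)
    have hA3 : η ((1:Fin 2),(0:Fin 2)) ((0:Fin 2),(0:Fin 2))
        + η ((1:Fin 2),(1:Fin 2)) ((0:Fin 2),(1:Fin 2))
        - η ((0:Fin 2),(0:Fin 2)) ((1:Fin 2),(0:Fin 2))
        - η ((0:Fin 2),(1:Fin 2)) ((1:Fin 2),(1:Fin 2)) = 0 :=
      cancel_left _ _ hIω (by linear_combination eA1 + eA2 + eA3 + eA4)
    have hA4 : η ((0:Fin 2),(0:Fin 2)) ((1:Fin 2),(0:Fin 2))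
        + η ((0:Fin 2),(1:Fin 2)) ((1:Fin 2),(1:Fin 2)) = 0 :=
      cancel_left _ _ hIω (by linear_combination (γ:ℂ)*hA3 - eA1 - eA3)
    have hxA : η ((0:Fin 2),(0:Fin 2)) ((1:Fin 2),(0:Fin 2)) = 0 := by
      linear_combination (hA4 + hA2)/2
    have huA : η ((0:Fin 2),(1:Fin 2)) ((1:Fin 2),(1:Fin 2)) = 0 := by
      linear_combination (hA4 - hA2)/2
    have hyA : η ((1:Fin 2),(0:Fin 2)) ((0:Fin 2),(0:Fin 2)) = 0 := by
      linear_combination (hA3 + hA4 + hA1)/2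
    have hvA : η ((1:Fin 2),(1:Fin 2)) ((0:Fin 2),(1:Fin 2)) = 0 := by
      linear_combination (hA3 + hA4 - hA1)/2
    -- Orbit B : x = η (0,0) (0,1), y = η (0,1) (0,0), u = η (1,0) (1,1), v = η (1,1) (1,0)
    have hB1 : η ((0:Fin 2),(1:Fin 2)) ((0:Fin 2),(0:Fin 2))
        - η ((1:Fin 2),(1:Fin 2)) ((1:Fin 2),(0:Fin 2)) = 0 :=
      cancel_left _ _ h8 (by linear_combination (-(γ:ℂ))*eB1 + (γ:ℂ)*eB3
        - (3*(γ:ℂ)+Complex.I*ω)*eB2 + (3*(γ:ℂ)+Complex.I*ω)*eB4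
        + ((ω:ℂ)^2*(η ((0:Fin 2),(1:Fin 2)) ((0:Fin 2),(0:Fin 2))
          - η ((1:Fin 2),(1:Fin 2)) ((1:Fin 2),(0:Fin 2))))*Complex.I_sq)
    have hB2 : η ((0:Fin 2),(0:Fin 2)) ((0:Fin 2),(1:Fin 2))
        - η ((1:Fin 2),(0:Fin 2)) ((1:Fin 2),(1:Fin 2)) = 0 :=
      cancel_left _ _ hγc (by linear_combination eB2 - eB4 + (3*(γ:ℂ)-Complex.I*ω)*hB1)
    have hB3 : η ((0:Fin 2),(1:Fin 2)) ((0:Fin 2),(0:Fin 2))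
        + η ((1:Fin 2),(1:Fin 2)) ((1:Fin 2),(0:Fin 2))
        - η ((0:Fin 2),(0:Fin 2)) ((0:Fin 2),(1:Fin 2))
        - η ((1:Fin 2),(0:Fin 2)) ((1:Fin 2),(1:Fin 2)) = 0 :=
      cancel_left _ _ hIω (by linear_combination eB1 + eB2 + eB3 + eB4)
    have hB4 : η ((0:Fin 2),(0:Fin 2)) ((0:Fin 2),(1:Fin 2))
        + η ((1:Fin 2),(0:Fin 2)) ((1:Fin 2),(1:Fin 2)) = 0 :=
      cancel_left _ _ hIω (by linear_combination (γ:ℂ)*hB3 - eB1 - eB3)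
    have hxB : η ((0:Fin 2),(0:Fin 2)) ((0:Fin 2),(1:Fin 2)) = 0 := by
      linear_combination (hB4 + hB2)/2
    have huB : η ((1:Fin 2),(0:Fin 2)) ((1:Fin 2),(1:Fin 2)) = 0 := by
      linear_combination (hB4 - hB2)/2
    have hyB : η ((0:Fin 2),(1:Fin 2)) ((0:Fin 2),(0:Fin 2)) = 0 := by
      linear_combination (hB3 + hB4 + hB1)/2
    have hvB : η ((1:Fin 2),(1:Fin 2)) ((1:Fin 2),(0:Fin 2)) = 0 := by
      linear_combination (hB3 + hB4 - hB1)/2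
    -- Orbit C : x = η (0,0) (1,1), y = η (1,1) (0,0), u = η (1,0) (0,1), v = η (0,1) (1,0)
    have hC1 : η ((0:Fin 2),(0:Fin 2)) ((1:Fin 2),(1:Fin 2))
        - η ((1:Fin 2),(1:Fin 2)) ((0:Fin 2),(0:Fin 2)) = 0 :=
      cancel_left _ _ hIω (by linear_combination (-(1:ℂ)/2)*(eC1+eC2+eC3+eC4))
    have hC2 : η ((0:Fin 2),(0:Fin 2)) ((1:Fin 2),(1:Fin 2))
        + η ((1:Fin 2),(1:Fin 2)) ((0:Fin 2),(0:Fin 2)) = 0 :=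
      cancel_left _ _ hIω (by linear_combination (-(1:ℂ)/2)*(eC1-eC2) - (γ:ℂ)*hC1)
    have hxC : η ((0:Fin 2),(0:Fin 2)) ((1:Fin 2),(1:Fin 2)) = 0 := by
      linear_combination (hC2 + hC1)/2
    have hyC : η ((1:Fin 2),(1:Fin 2)) ((0:Fin 2),(0:Fin 2)) = 0 := by
      linear_combination (hC2 - hC1)/2
    have hC3 : η ((1:Fin 2),(0:Fin 2)) ((0:Fin 2),(1:Fin 2))
        - η ((0:Fin 2),(1:Fin 2)) ((1:Fin 2),(0:Fin 2)) = 0 :=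
      cancel_left _ _ hγc (by linear_combination (-(1:ℂ)/2)*(eC3-eC4))
    have hC4 : η ((1:Fin 2),(0:Fin 2)) ((0:Fin 2),(1:Fin 2))
        + η ((0:Fin 2),(1:Fin 2)) ((1:Fin 2),(0:Fin 2)) = 0 :=
      cancel_left _ _ hγc (by linear_combination (γ:ℂ)*hC2 - (1/2:ℂ)*(eC3+eC4))
    have huC : η ((1:Fin 2),(0:Fin 2)) ((0:Fin 2),(1:Fin 2)) = 0 := by
      linear_combination (hC4 + hC3)/2
    have hvC : η ((0:Fin 2),(1:Fin 2)) ((1:Fin 2),(0:Fin 2)) = 0 := by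
      linear_combination (hC4 - hC3)/2
    -- Orbit D : diagonal entries
    have hD14 : η ((0:Fin 2),(0:Fin 2)) ((0:Fin 2),(0:Fin 2))
        - η ((1:Fin 2),(1:Fin 2)) ((1:Fin 2),(1:Fin 2)) = 0 :=
      cancel_left _ _ hγc (by linear_combination (-(1:ℂ)/2)*(eD1-eD4))
    have hD12 : η ((0:Fin 2),(0:Fin 2)) ((0:Fin 2),(0:Fin 2))
        - η ((1:Fin 2),(0:Fin 2)) ((1:Fin 2),(0:Fin 2)) = 0 :=
      cancel_left _ _ hγc (by linear_combination (1/2:ℂ)*eD2 + ((γ:ℂ)/2)*hD14)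
    have hD13 : η ((0:Fin 2),(0:Fin 2)) ((0:Fin 2),(0:Fin 2))
        - η ((0:Fin 2),(1:Fin 2)) ((0:Fin 2),(1:Fin 2)) = 0 :=
      cancel_left _ _ hγc (by linear_combination (1/2:ℂ)*eD3 + ((γ:ℂ)/2)*hD14)
    have hd1 : η ((0:Fin 2),(0:Fin 2)) ((0:Fin 2),(0:Fin 2)) = 4⁻¹ := by
      linear_combination (1/4:ℂ)*ht + (1/4:ℂ)*hD12 + (1/4:ℂ)*hD13 + (1/4:ℂ)*hD14
    have hd2 : η ((1:Fin 2),(0:Fin 2)) ((1:Fin 2),(0:Fin 2)) = 4⁻¹ := by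
      linear_combination hd1 - hD12
    have hd3 : η ((0:Fin 2),(1:Fin 2)) ((0:Fin 2),(1:Fin 2)) = 4⁻¹ := by
      linear_combination hd1 - hD13
    have hd4 : η ((1:Fin 2),(1:Fin 2)) ((1:Fin 2),(1:Fin 2)) = 4⁻¹ := by
      linear_combination hd1 - hD14
    ext ⟨i, j⟩ ⟨k, l⟩
    fin_cases i <;> fin_cases j <;> fin_cases k <;> fin_cases l <;>
      simp only [Matrix.smul_apply, Matrix.one_apply, smul_eq_mul] <;>
      norm_num
    · linear_combination hd1
    · exact hxB
    · exact hxA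
    · exact hxC
    · exact hyB
    · linear_combination hd3
    · exact hvC
    · exact huA
    · exact hyA
    · exact huC
    · linear_combination hd2
    · exact huB
    · exact hyC
    · exact hvA
    · exact hvB
    · linear_combination hd4
  · -- reverse direction
    subst hEq
    refine ⟨psd_smul_one _ (by norm_num [Complex.le_def]), ?_, ?_⟩
    · simp [Matrix.trace_smul, Matrix.trace_one]
    · rw [hL]
      simp only [Matrix.mul_smul, Matrix.smul_mul, Matrix.mul_one, Matrix.one_mul,
        ← Matrix.mul_kronecker_mul, hx2, Matrix.one_kronecker_one]
      simp
  · exact ⟨(2:ℂ)⁻¹ • 1, (2:ℂ)⁻¹ • 1,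
      psd_smul_one _ (by norm_num [Complex.le_def]), by simp [Matrix.trace_smul],
      psd_smul_one _ (by norm_num [Complex.le_def]), by simp [Matrix.trace_smul], hkron⟩
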